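/- Let $\mathcal{S}$ be an infinite set of positive integers and $\mu>0$ such that $\sum_{s\in\mathcal{S}} s^{-\mu} = \infty$. Then there exists a subset $\mathcal{S}'\subseteq\mathcal{S}$ such that $\sum_{s\in\mathcal{S}'} s^{-\mu} = \infty$ while $\sum_{s\in\mathcal{S}'} s^{-\mu-\epsilon} < \infty$ for every $\epsilon>0$; i.e., the exponent of convergence of $\mathcal{S}'$ equals $\mu$. -/

import Mathlib

open Set
open scoped ENNReal

private lemma trim_finset (f : ℕ → ℝ≥0∞) :
    ∀ F : Finset ℕ, (∀ s ∈ F, f s ≤ 1) → 1 ≤ ∑ s ∈ F, f s →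
    ∃ F', F' ⊆ F ∧ 1 ≤ ∑ s ∈ F', f s ∧ ∑ s ∈ F', f s ≤ 2 := by
  intro F
  induction F using Finset.strongInduction with
  | _ F ih =>
    intro h1 h2
    by_cases h : ∑ s ∈ F, f s ≤ 2
    · exact ⟨F, subset_rfl, h2, h⟩
    push_neg at h
    have hne : F.Nonempty := by
      rcases F.eq_empty_or_nonempty with rfl | hne
      · simp at h2
      · exact hne
    obtain ⟨a, ha⟩ := hne
    have hkey : 1 ≤ ∑ s ∈ F.erase a, f s := by
      by_contra hc
      push_neg at hc
      have heq : ∑ s ∈ F, f s = f a + ∑ s ∈ F.erase a, f s :=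
        (Finset.add_sum_erase F f ha).symm
      have hlt : ∑ s ∈ F, f s < 2 := by
        calc ∑ s ∈ F, f s = f a + ∑ s ∈ F.erase a, f s := heq
          _ ≤ 1 + ∑ s ∈ F.erase a, f s := by
              exact add_le_add_left (h1 a ha) _
          _ < 1 + 1 := ENNReal.add_lt_add_left ENNReal.one_ne_top hc
          _ = 2 := one_add_one_eq_two
      exact absurd hlt (not_lt.2 h.le)
    obtain ⟨F', hsub, hl, hu⟩ := ih (F.erase a) (Finset.erase_ssubset ha)
      (fun s hs => h1 s (Finset.mem_of_mem_erase hs)) hkey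
    exact ⟨F', hsub.trans (Finset.erase_subset _ _), hl, hu⟩

theorem exists_subset_with_exact_exponent (S : Set ℕ) (hSpos : ∀ s ∈ S, 0 < s)
    (hSinf : S.Infinite) (μ : ℝ) (hμ : 0 < μ)
    (hdiv : ¬ Summable (fun s : S => ((s : ℕ) : ℝ) ^ (-μ))) :
    ∃ S' : Set ℕ, S' ⊆ S ∧
      ¬ Summable (fun s : S' => ((s : ℕ) : ℝ) ^ (-μ)) ∧
      ∀ ε : ℝ, 0 < ε → Summable (fun s : S' => ((s : ℕ) : ℝ) ^ (-(μ + ε))) := by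
  classical
  set G : ℝ → ℕ → ℝ≥0∞ := fun ν s => ((s : ℕ) : ℝ≥0∞) ^ (-ν) with hG
  have hone : ∀ s ∈ S, (1 : ℝ≥0∞) ≤ ((s : ℕ) : ℝ≥0∞) := by
    intro s hs
    exact_mod_cast Nat.one_le_cast.2 (hSpos s hs)
  have hle1 : ∀ (ν : ℝ), 0 < ν → ∀ s ∈ S, G ν s ≤ 1 := by
    intro ν hν s hs
    exact ENNReal.rpow_le_one_of_one_le_of_neg (hone s hs) (neg_lt_zero.2 hν)
  -- conversion: finite ENNReal tsum → real summability
  have keyConv : ∀ (ν : ℝ) (T : Set ℕ),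
      (∑' s : T, ((s : ℕ) : ℝ≥0∞) ^ (-ν)) ≠ ⊤ →
      Summable (fun s : T => ((s : ℕ) : ℝ) ^ (-ν)) := by
    intro ν T h
    have h2 := ENNReal.summable_toReal h
    refine h2.congr fun s => ?_
    rw [← ENNReal.toReal_rpow]
    simp
  -- conversion: real summability → finite ENNReal tsum (for positive members)
  have keyConv2 : ∀ (ν : ℝ) (T : Set ℕ), T ⊆ S →
      Summable (fun s : T => ((s : ℕ) : ℝ) ^ (-ν)) →
      (∑' s : T, ((s : ℕ) : ℝ≥0∞) ^ (-ν)) ≠ ⊤ := by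
    intro ν T hT hsum
    have h0 : ∀ s : T, (0 : ℝ) ≤ ((s : ℕ) : ℝ) ^ (-ν) := fun s =>
      Real.rpow_nonneg (by positivity) _
    have heq : ∀ s : T, ENNReal.ofReal (((s : ℕ) : ℝ) ^ (-ν)) = ((s : ℕ) : ℝ≥0∞) ^ (-ν) := by
      intro s
      have hpos : (0 : ℝ) < ((s : ℕ) : ℝ) := by exact_mod_cast hSpos s (hT s.2)
      rw [← ENNReal.ofReal_rpow_of_pos hpos, ENNReal.ofReal_natCast]
    have := ENNReal.ofReal_tsum_of_nonneg h0 hsum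
    rw [tsum_congr heq] at this
    rw [← this]
    exact ENNReal.ofReal_ne_top
  have hdivtop : (∑' s : S, ((s : ℕ) : ℝ≥0∞) ^ (-μ)) = ⊤ := by
    by_contra h
    exact hdiv (keyConv μ S h)
  -- every tail diverges
  have htail : ∀ n : ℕ, (∑' s : ℕ, (S ∩ Ici n).indicator (G μ) s) = ⊤ := by
    intro n
    have hsplit : S.indicator (G μ) =
        fun s => (S ∩ Iio n).indicator (G μ) s + (S ∩ Ici n).indicator (G μ) s := by
      funext s
      by_cases hs : s ∈ S
      · by_cases hn : s < n
        · have h1 : s ∈ S ∩ Iio n := ⟨hs, hn⟩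
          have h2 : s ∉ S ∩ Ici n := fun h => absurd h.2 (not_le.2 hn)
          simp [indicator_of_mem hs, indicator_of_mem h1, indicator_of_notMem h2]
        · have h1 : s ∉ S ∩ Iio n := fun h => hn h.2
          have h2 : s ∈ S ∩ Ici n := ⟨hs, not_lt.1 hn⟩
          simp [indicator_of_mem hs, indicator_of_notMem h1, indicator_of_mem h2]
      · have h1 : s ∉ S ∩ Iio n := fun h => hs h.1
        have h2 : s ∉ S ∩ Ici n := fun h => hs h.1
        simp [indicator_of_notMem hs, indicator_of_notMem h1, indicator_of_notMem h2]
    have hS' : (∑' s : ℕ, S.indicator (G μ) s) = ⊤ := by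
      rw [← tsum_subtype]
      exact hdivtop
    rw [hsplit, ENNReal.tsum_add] at hS'
    have hfin : (∑' s : ℕ, (S ∩ Iio n).indicator (G μ) s) ≠ ⊤ := by
      have hout : ∀ s ∉ Finset.range n, (S ∩ Iio n).indicator (G μ) s = 0 := by
        intro s hs
        apply indicator_of_notMem
        intro h
        exact hs (Finset.mem_range.2 h.2)
      rw [tsum_eq_sum hout]
      have : ∀ s ∈ Finset.range n, (S ∩ Iio n).indicator (G μ) s ≠ ⊤ := by
        intro s _
        by_cases h : s ∈ S ∩ Iio n
        · rw [indicator_of_mem h]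
          exact ((hle1 μ hμ s h.1).trans_lt ENNReal.one_lt_top).ne
        · simp [indicator_of_notMem h]
      exact (ENNReal.sum_lt_top.2 (fun a ha => lt_top_iff_ne_top.2 (this a ha))).ne
    by_contra hB
    exact (ENNReal.add_ne_top.2 ⟨hfin, hB⟩) hS'
  -- block extraction
  have hblock : ∀ n : ℕ, ∃ F : Finset ℕ, (↑F : Set ℕ) ⊆ S ∩ Ici n ∧
      1 ≤ ∑ s ∈ F, G μ s ∧ ∑ s ∈ F, G μ s ≤ 2 := by
    intro n
    have h1 := htail n
    rw [ENNReal.tsum_eq_iSup_sum] at h1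
    have h2 : (1 : ℝ≥0∞) < ⨆ F : Finset ℕ, ∑ s ∈ F, (S ∩ Ici n).indicator (G μ) s := by
      rw [h1]; exact ENNReal.one_lt_top
    obtain ⟨F, hF⟩ := lt_iSup_iff.mp h2
    set F1 := F.filter (fun s => s ∈ S ∩ Ici n) with hF1
    have hsum_eq : ∑ s ∈ F1, G μ s = ∑ s ∈ F, (S ∩ Ici n).indicator (G μ) s := by
      rw [hF1, Finset.sum_filter]
      refine Finset.sum_congr rfl fun s _ => ?_
      by_cases h : s ∈ S ∩ Ici n <;> simp [Set.indicator, h]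
    have hmem : ∀ s ∈ F1, s ∈ S ∩ Ici n := fun s hs => (Finset.mem_filter.1 hs).2
    have hle : ∀ s ∈ F1, G μ s ≤ 1 := fun s hs => hle1 μ hμ s (hmem s hs).1
    obtain ⟨F', hsub, hl, hu⟩ := trim_finset (G μ) F1 hle (by rw [hsum_eq]; exact hF.le)
    exact ⟨F', fun s hs => hmem s (hsub (Finset.mem_coe.1 hs)), hl, hu⟩
  choose pick hpick_sub hpick_lo hpick_hi using hblock
  -- thresholds
  set N : ℕ → ℕ := fun k =>
    Nat.rec 1 (fun k nk => max (((pick nk).sup id) + 1) (2 ^ ((k + 1) * (k + 1)))) k with hNdef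
  have hN0 : N 0 = 1 := rfl
  have hNs : ∀ k, N (k + 1) = max (((pick (N k)).sup id) + 1) (2 ^ ((k + 1) * (k + 1))) :=
    fun k => rfl
  have hFsub : ∀ k, (↑(pick (N k)) : Set ℕ) ⊆ S ∩ Ici (N k) := fun k => hpick_sub (N k)
  have hNpow : ∀ k, 2 ^ (k * k) ≤ N k := by
    intro k
    cases k with
    | zero => simp [hN0]
    | succ k => rw [hNs]; exact le_max_right _ _
  have hlt : ∀ k, ∀ s ∈ pick (N k), s < N (k + 1) := by
    intro k s hs
    have h1 : s ≤ (pick (N k)).sup id := Finset.le_sup (f := id) hs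
    rw [hNs]
    exact lt_of_lt_of_le (Nat.lt_succ_of_le h1) (le_max_left _ _)
  have hmono : ∀ k, N k < N (k + 1) := by
    intro k
    have hne : (pick (N k)).Nonempty := by
      by_contra h
      rw [Finset.not_nonempty_iff_eq_empty] at h
      have := hpick_lo (N k)
      rw [h] at this
      simp at this
    obtain ⟨s, hs⟩ := hne
    have h1 : N k ≤ s := (hFsub k (Finset.mem_coe.2 hs)).2
    exact lt_of_le_of_lt h1 (hlt k s hs)
  have hsm : StrictMono N := strictMono_nat_of_lt_succ hmono
  have horder : ∀ k j, k < j → ∀ s ∈ pick (N k), ∀ t ∈ pick (N j), s < t := by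
    intro k j hkj s hs t ht
    have h1 : s < N (k + 1) := hlt k s hs
    have h2 : N j ≤ t := (hFsub j (Finset.mem_coe.2 ht)).2
    have h3 : N (k + 1) ≤ N j := hsm.monotone (Nat.succ_le_of_lt hkj)
    omega
  have hdisj : ∀ k j, k ≠ j → Disjoint (pick (N k)) (pick (N j)) := by
    intro k j hkj
    refine Finset.disjoint_left.2 fun {s} hsk hsj => ?_
    rcases lt_or_gt_of_ne hkj with h | h
    · exact lt_irrefl s (horder k j h s hsk s hsj)
    · exact lt_irrefl s (horder j k h s hsj s hsk)
  refine ⟨⋃ k, (↑(pick (N k)) : Set ℕ), ?_, ?_, ?_⟩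
  · intro s hs
    obtain ⟨k, hk⟩ := mem_iUnion.1 hs
    exact (hFsub k hk).1
  · -- divergence at μ
    set S' : Set ℕ := ⋃ k, (↑(pick (N k)) : Set ℕ) with hS'def
    have hS'sub : S' ⊆ S := by
      intro s hs
      obtain ⟨k, hk⟩ := mem_iUnion.1 hs
      exact (hFsub k hk).1
    intro hsum
    have htop : (∑' s : S', ((s : ℕ) : ℝ≥0∞) ^ (-μ)) = ⊤ := by
      rw [show (∑' s : S', ((s : ℕ) : ℝ≥0∞) ^ (-μ))
          = ∑' s : ℕ, S'.indicator (G μ) s from tsum_subtype S' (G μ)]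
      refine ENNReal.eq_top_of_forall_nnreal_le fun r => ?_
      set K := ⌈r⌉₊ with hK
      have h1 : (r : ℝ≥0∞) ≤ (K : ℝ≥0∞) := by
        rw [hK]
        exact_mod_cast ENNReal.coe_le_coe.2 (Nat.le_ceil r)
      refine h1.trans ?_
      set B := (Finset.range K).biUnion (fun k => pick (N k)) with hB
      have hdisj' : ((Finset.range K : Finset ℕ) : Set ℕ).PairwiseDisjoint
          (fun k => pick (N k)) := by
        intro k _ j _ hkj
        exact hdisj k j hkj
      calc (K : ℝ≥0∞) = ∑ k ∈ Finset.range K, 1 := by simp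
        _ ≤ ∑ k ∈ Finset.range K, ∑ s ∈ pick (N k), G μ s :=
            Finset.sum_le_sum fun k _ => hpick_lo (N k)
        _ = ∑ s ∈ B, G μ s := (Finset.sum_biUnion hdisj').symm
        _ = ∑ s ∈ B, S'.indicator (G μ) s := by
            refine Finset.sum_congr rfl fun s hs => ?_
            obtain ⟨k, _, hk⟩ := Finset.mem_biUnion.1 hs
            exact (indicator_of_mem (mem_iUnion.2 ⟨k, Finset.mem_coe.2 hk⟩) _).symm
        _ ≤ ∑' s : ℕ, S'.indicator (G μ) s := ENNReal.sum_le_tsum B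
    exact keyConv2 μ S' hS'sub hsum htop
  · -- convergence at μ + ε
    set S' : Set ℕ := ⋃ k, (↑(pick (N k)) : Set ℕ) with hS'def
    intro ε hε
    apply keyConv (μ + ε) S'
    rw [show (∑' s : S', ((s : ℕ) : ℝ≥0∞) ^ (-(μ + ε)))
        = ∑' s : ℕ, S'.indicator (G (μ + ε)) s from tsum_subtype S' (G (μ + ε))]
    set c : ℝ≥0∞ := (2 : ℝ≥0∞) ^ (-ε) with hc
    have hblockbound : ∀ k, ∑ s ∈ pick (N k), G (μ + ε) s ≤ 2 * c ^ k := by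
      intro k
      have hstep : ∀ s ∈ pick (N k), G (μ + ε) s ≤ G μ s * c ^ k := by
        intro s hs
        have hsS : s ∈ S := (hFsub k (Finset.mem_coe.2 hs)).1
        have hs0 : ((s : ℕ) : ℝ≥0∞) ≠ 0 :=
          Nat.cast_ne_zero.2 (hSpos s hsS).ne'
        have hsT : ((s : ℕ) : ℝ≥0∞) ≠ ⊤ := ENNReal.natCast_ne_top s
        have hsplit : G (μ + ε) s = G μ s * ((s : ℕ) : ℝ≥0∞) ^ (-ε) := by
          rw [hG]
          simp only []
          rw [show -(μ + ε) = -μ + -ε by ring, ENNReal.rpow_add _ _ hs0 hsT]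
        rw [hsplit]
        refine mul_le_mul_right ?_ _
        have hkk : k ≤ k * k := by
          rcases Nat.eq_zero_or_pos k with rfl | hk
          · simp
          · exact Nat.le_mul_of_pos_left k hk
        have h2k : (2 : ℕ) ^ k ≤ s :=
          le_trans (Nat.pow_le_pow_right (by norm_num) hkk)
            (le_trans (hNpow k) ((hFsub k (Finset.mem_coe.2 hs)).2))
        have h2k' : ((2 : ℝ≥0∞)) ^ k ≤ ((s : ℕ) : ℝ≥0∞) := by
          exact_mod_cast Nat.cast_le.2 h2k
        calc ((s : ℕ) : ℝ≥0∞) ^ (-ε)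
            ≤ ((2 : ℝ≥0∞) ^ k) ^ (-ε) := by
              rw [ENNReal.rpow_neg, ENNReal.rpow_neg]
              exact ENNReal.inv_le_inv.2 (ENNReal.rpow_le_rpow h2k' hε.le)
          _ = c ^ k := by
              rw [hc, ← ENNReal.rpow_natCast (2 : ℝ≥0∞) k, ← ENNReal.rpow_mul,
                ← ENNReal.rpow_natCast ((2 : ℝ≥0∞) ^ (-ε)) k, ← ENNReal.rpow_mul, mul_comm]
      calc ∑ s ∈ pick (N k), G (μ + ε) s
          ≤ ∑ s ∈ pick (N k), G μ s * c ^ k := Finset.sum_le_sum hstep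
        _ = (∑ s ∈ pick (N k), G μ s) * c ^ k := (Finset.sum_mul _ _ _).symm
        _ ≤ 2 * c ^ k := mul_le_mul_left (hpick_hi (N k)) _
    have hpt : ∀ s : ℕ, S'.indicator (G (μ + ε)) s ≤
        ∑' k : ℕ, (↑(pick (N k)) : Set ℕ).indicator (G (μ + ε)) s := by
      intro s
      by_cases hs : s ∈ S'
      · obtain ⟨k, hk⟩ := mem_iUnion.1 hs
        rw [indicator_of_mem hs]
        calc G (μ + ε) s = (↑(pick (N k)) : Set ℕ).indicator (G (μ + ε)) s :=
              (indicator_of_mem hk _).symm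
          _ ≤ _ := ENNReal.le_tsum k
      · simp [indicator_of_notMem hs]
    have h1 : (∑' s : ℕ, S'.indicator (G (μ + ε)) s) ≤ ∑' k : ℕ, 2 * c ^ k := by
      calc (∑' s : ℕ, S'.indicator (G (μ + ε)) s)
          ≤ ∑' s : ℕ, ∑' k : ℕ, (↑(pick (N k)) : Set ℕ).indicator (G (μ + ε)) s :=
            ENNReal.tsum_le_tsum hpt
        _ = ∑' k : ℕ, ∑' s : ℕ, (↑(pick (N k)) : Set ℕ).indicator (G (μ + ε)) s :=
            ENNReal.tsum_comm
        _ = ∑' k : ℕ, ∑ s ∈ pick (N k), G (μ + ε) s := by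
            refine tsum_congr fun k => ?_
            rw [tsum_eq_sum (s := pick (N k))
              (fun s hs => indicator_of_notMem (fun h => hs (Finset.mem_coe.1 h)) _)]
            exact Finset.sum_congr rfl fun s hs => indicator_of_mem (Finset.mem_coe.2 hs) _
        _ ≤ ∑' k : ℕ, 2 * c ^ k := ENNReal.tsum_le_tsum hblockbound
    have h2 : (∑' k : ℕ, 2 * c ^ k) < ⊤ := by
      rw [ENNReal.tsum_mul_left, ENNReal.tsum_geometric]
      have hr : c < 1 :=
        ENNReal.rpow_lt_one_of_one_lt_of_neg ENNReal.one_lt_two (neg_lt_zero.2 hε)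
      refine ENNReal.mul_lt_top (by norm_num) ?_
      rw [ENNReal.inv_lt_top]
      exact tsub_pos_iff_lt.2 hr
    exact (h1.trans_lt h2).ne
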